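/- arXiv:1205.1050 — 4 statements merged into one kernel-verified Lean document; each statement's English description precedes it below -/
import Mathlib

section
/- Let Σ be an unsatisfiable set of clauses with w(Σ) ≤ k. If there is no resolution refutation of Σ of width at most k, then there exists an extendible (k+1)-family of partial assignments for Σ. -/
attribute [local instance] Classical.propDecidable

/-- A clause: a finite set of literals, a literal being a variable with a sign. -/
abbrev Clause := Finset (ℕ × Bool)

/-- A total truth assignment satisfies a clause if it makes some literal true. -/
def clauseSat (a : ℕ → Bool) (C : Clause) : Prop :=
  ∃ l ∈ C, (if l.2 then a l.1 else !(a l.1)) = true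

/-- A set of clauses is unsatisfiable (contradictory). -/
def Unsat (S : Set Clause) : Prop := ∀ a : ℕ → Bool, ¬ ∀ C ∈ S, clauseSat a C

/-- The variables occurring in a set of clauses. -/
def varsOf (S : Set Clause) : Set ℕ := {x | ∃ C ∈ S, ∃ b, (x, b) ∈ C}

/-- The resolventCl of C and D upon the variable x. -/
def resolventCl (C D : Clause) (x : ℕ) : Clause := C.erase (x, true) ∪ D.erase (x, false)

/-- A (general, dag-like) resolution derivation from S: a sequence of clauses each of
which is a clause of S or a resolventCl of two earlier clauses. -/
def IsDerivation (S : Set Clause) (L : List Clause) : Prop :=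
  ∀ i < L.length, L.getD i ∅ ∈ S ∨
    ∃ j < i, ∃ k < i, ∃ x : ℕ,
      (x, true) ∈ L.getD j ∅ ∧ (x, false) ∈ L.getD k ∅ ∧
      L.getD i ∅ = resolventCl (L.getD j ∅) (L.getD k ∅) x

/-- A resolution refutation of S: a derivation from S containing the empty clause. -/
def IsRefutation (S : Set Clause) (L : List Clause) : Prop :=
  IsDerivation S L ∧ (∅ : Clause) ∈ L

/-- A partial assignment, presented as a functional finite set of (variable, value)
pairs; its cardinality is the number of assigned variables. -/
def Functional (α : Finset (ℕ × Bool)) : Prop :=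
  ∀ x b b', (x, b) ∈ α → (x, b') ∈ α → b = b'

/-- A partial assignment falsifies a clause if it sets every literal of it false. -/
def Falsifies (α : Finset (ℕ × Bool)) (C : Clause) : Prop := ∀ l ∈ C, (l.1, !l.2) ∈ α

/-- An extendible k-family for S: a nonempty family of partial assignments, none
falsifying a clause of S, each of size at most k, closed under subassignments, and
such that any member of size < k can be extended inside the family so as to assign
any given variable of S. -/
def ExtFamily (S : Set Clause) (k : ℕ) (A : Set (Finset (ℕ × Bool))) : Prop :=
  A.Nonempty ∧
  (∀ α ∈ A, Functional α) ∧
  (∀ α ∈ A, ∀ C ∈ S, ¬ Falsifies α C) ∧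
  (∀ α ∈ A, α.card ≤ k) ∧
  (∀ α ∈ A, ∀ β ⊆ α, β ∈ A) ∧
  (∀ α ∈ A, α.card < k → ∀ x ∈ varsOf S, ∃ β ∈ A, α ⊆ β ∧ ∃ b, (x, b) ∈ β)


/-- Inductive closure of S under resolution of width at most k. -/
inductive Der (S : Set Clause) (k : ℕ) : Clause → Prop
  | ax {C : Clause} (h : C ∈ S) : Der S k C
  | res {C D : Clause} {x : ℕ} (hC : Der S k C) (hD : Der S k D)
      (hx : (x, true) ∈ C) (hx' : (x, false) ∈ D)
      (hcard : (resolventCl C D x).card ≤ k) : Der S k (resolventCl C D x)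

lemma getD_app_left (L M : List Clause) {i : ℕ} (h : i < L.length) :
    (L ++ M).getD i ∅ = L.getD i ∅ := List.getD_append _ _ _ _ h

lemma getD_app_right (L M : List Clause) {i : ℕ} (h : L.length ≤ i) :
    (L ++ M).getD i ∅ = M.getD (i - L.length) ∅ := List.getD_append_right _ _ _ _ h

lemma deriv_append {S : Set Clause} {L1 L2 : List Clause}
    (h1 : IsDerivation S L1) (h2 : IsDerivation S L2) :
    IsDerivation S (L1 ++ L2) := by
  intro i hi
  by_cases hlt : i < L1.length
  · rcases h1 i hlt with hs | ⟨j, hj, m, hm, x, hxj, hxm, heq⟩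
    · left; rwa [getD_app_left _ _ hlt]
    · right
      refine ⟨j, hj, m, hm, x, ?_, ?_, ?_⟩
      · rw [getD_app_left _ _ (hj.trans hlt)]; exact hxj
      · rw [getD_app_left _ _ (hm.trans hlt)]; exact hxm
      · rw [getD_app_left _ _ hlt, getD_app_left _ _ (hj.trans hlt),
          getD_app_left _ _ (hm.trans hlt)]; exact heq
  · push_neg at hlt
    have hi2 : i - L1.length < L2.length := by
      simp only [List.length_append] at hi; omega
    rcases h2 (i - L1.length) hi2 with hs | ⟨j, hj, m, hm, x, hxj, hxm, heq⟩
    · left; rwa [getD_app_right _ _ hlt]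
    · right
      refine ⟨j + L1.length, by omega, m + L1.length, by omega, x, ?_, ?_, ?_⟩
      · rw [getD_app_right _ _ (by omega : L1.length ≤ j + L1.length),
          Nat.add_sub_cancel]; exact hxj
      · rw [getD_app_right _ _ (by omega : L1.length ≤ m + L1.length),
          Nat.add_sub_cancel]; exact hxm
      · rw [getD_app_right _ _ hlt,
          getD_app_right _ _ (by omega : L1.length ≤ j + L1.length),
          getD_app_right _ _ (by omega : L1.length ≤ m + L1.length),
          Nat.add_sub_cancel, Nat.add_sub_cancel]; exact heq

lemma der_to_list {S : Set Clause} {k : ℕ} {C : Clause}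
    (hd : Der S k C) (hw : ∀ C ∈ S, C.card ≤ k) :
    ∃ L : List Clause, IsDerivation S L ∧ (∀ E ∈ L, E.card ≤ k) ∧ C ∈ L := by
  induction hd with
  | ax h =>
    rename_i C
    refine ⟨[C], ?_, ?_, List.mem_singleton.mpr rfl⟩
    · intro i hi
      simp only [List.length_singleton] at hi
      have hi0 : i = 0 := by omega
      subst hi0
      exact Or.inl h
    · intro E hE; rw [List.mem_singleton] at hE; subst hE; exact hw _ h
  | res hC hD hx hx' hcard ihC ihD =>
    rename_i C D x
    obtain ⟨L1, hL1, hw1, hm1⟩ := ihC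
    obtain ⟨L2, hL2, hw2, hm2⟩ := ihD
    obtain ⟨j, hj, hj'⟩ := List.getElem_of_mem hm1
    obtain ⟨m, hm, hm'⟩ := List.getElem_of_mem hm2
    refine ⟨(L1 ++ L2) ++ [resolventCl C D x], ?_, ?_, by simp⟩
    · have h12 := deriv_append hL1 hL2
      intro i hi
      simp only [List.length_append, List.length_singleton] at hi
      by_cases hlt : i < L1.length + L2.length
      · have hlt' : i < (L1 ++ L2).length := by simpa using hlt
        rcases h12 i hlt' with hs | ⟨a, ha, b, hb, y, hya, hyb, heq⟩
        · left; rwa [getD_app_left _ _ hlt']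
        · right
          refine ⟨a, ha, b, hb, y, ?_, ?_, ?_⟩
          · rw [getD_app_left _ _ (ha.trans hlt')]; exact hya
          · rw [getD_app_left _ _ (hb.trans hlt')]; exact hyb
          · rw [getD_app_left _ _ hlt', getD_app_left _ _ (ha.trans hlt'),
              getD_app_left _ _ (hb.trans hlt')]; exact heq
      · have hieq : i = L1.length + L2.length := by omega
        right
        have hjlt : j < (L1 ++ L2).length := by simp; omega
        have hmlt : L1.length + m < (L1 ++ L2).length := by simp; omega
        have ej : ((L1 ++ L2) ++ [resolventCl C D x]).getD j ∅ = C := by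
          rw [getD_app_left _ _ hjlt, getD_app_left _ _ hj,
            List.getD_eq_getElem _ _ hj, hj']
        have em : ((L1 ++ L2) ++ [resolventCl C D x]).getD (L1.length + m) ∅ = D := by
          rw [getD_app_left _ _ hmlt,
            getD_app_right L1 L2 (by omega), Nat.add_sub_cancel_left,
            List.getD_eq_getElem _ _ hm, hm']
        have ei : ((L1 ++ L2) ++ [resolventCl C D x]).getD i ∅ = resolventCl C D x := by
          rw [getD_app_right (L1 ++ L2) _ (by simp [hieq])]
          have h0 : i - (L1 ++ L2).length = 0 := by simp [hieq]
          rw [h0]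
          rfl
        refine ⟨j, by omega, L1.length + m, by omega, x, ?_, ?_, ?_⟩
        · rw [ej]; exact hx
        · rw [em]; exact hx'
        · rw [ei, ej, em]
    · intro E hE
      rcases List.mem_append.mp hE with hE | hE
      · rcases List.mem_append.mp hE with hE | hE
        · exact hw1 _ hE
        · exact hw2 _ hE
      · rw [List.mem_singleton] at hE; subst hE; exact hcard


/-- If Σ is unsatisfiable, w(Σ) ≤ k, and there is no resolution refutation of Σ of
width at most k, then there is an extendible (k+1)-family for Σ. -/
theorem extendible_family_of_no_narrow_refutation (S : Set Clause) (k : ℕ)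
    (hU : Unsat S) (hw : ∀ C ∈ S, C.card ≤ k)
    (h : ¬ ∃ L : List Clause, IsRefutation S L ∧ ∀ C ∈ L, C.card ≤ k) :
    ∃ A : Set (Finset (ℕ × Bool)), ExtFamily S (k + 1) A := by
  classical
  have hne : ¬ Der S k (∅ : Clause) := by
    intro hd
    obtain ⟨L, hL, hwL, hmem⟩ := der_to_list hd hw
    exact h ⟨L, ⟨hL, hmem⟩, hwL⟩
  refine ⟨{α | Functional α ∧ α.card ≤ k + 1 ∧ ∀ C, Der S k C → ¬ Falsifies α C}, ?_⟩
  refine ⟨⟨∅, ?_, by simp, ?_⟩, fun α hα => hα.1, fun α hα C hC => hα.2.2 C (Der.ax hC),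
    fun α hα => hα.2.1, ?_, ?_⟩
  · intro x b b' hb; simp at hb
  · intro C hC hF
    rcases Finset.eq_empty_or_nonempty C with rfl | ⟨l, hl⟩
    · exact hne hC
    · have := hF l hl; simp at this
  · intro α hα β hβ
    refine ⟨fun x b b' hb hb' => hα.1 x b b' (hβ hb) (hβ hb'),
      le_trans (Finset.card_le_card hβ) hα.2.1, fun C hC hF => hα.2.2 C hC ?_⟩
    exact fun l hl => hβ (hF l hl)
  · intro α hα hcard x _
    by_cases hx : ∃ b, (x, b) ∈ α
    · exact ⟨α, hα, Finset.Subset.refl α, hx⟩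
    · push_neg at hx
      have key : ∃ b : Bool, ∀ C, Der S k C → ¬ Falsifies (insert (x, b) α) C := by
        by_contra hcon
        push_neg at hcon
        obtain ⟨C1, hC1, hF1⟩ := hcon true
        obtain ⟨C0, hC0, hF0⟩ := hcon false
        have hxC1 : (x, false) ∈ C1 := by
          by_contra hxc
          refine hα.2.2 C1 hC1 (fun l hl => ?_)
          rcases Finset.mem_insert.mp (hF1 l hl) with heq | hmem
          · exfalso
            rw [Prod.mk.injEq] at heq
            have h3 : l.2 = false := by simpa using heq.2
            have hl' : l = (x, false) := Prod.ext_iff.mpr ⟨heq.1, h3⟩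
            exact hxc (hl' ▸ hl)
          · exact hmem
        have hxC0 : (x, true) ∈ C0 := by
          by_contra hxc
          refine hα.2.2 C0 hC0 (fun l hl => ?_)
          rcases Finset.mem_insert.mp (hF0 l hl) with heq | hmem
          · exfalso
            rw [Prod.mk.injEq] at heq
            have h3 : l.2 = true := by simpa using heq.2
            have hl' : l = (x, true) := Prod.ext_iff.mpr ⟨heq.1, h3⟩
            exact hxc (hl' ▸ hl)
          · exact hmem
        set R : Clause := resolventCl C0 C1 x with hR
        have hFR : Falsifies α R := by
          intro l hl
          rcases Finset.mem_union.mp hl with hl' | hl'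
          · obtain ⟨hne', hlC⟩ := Finset.mem_erase.mp hl'
            rcases Finset.mem_insert.mp (hF0 l hlC) with heq | hmem
            · exfalso
              rw [Prod.mk.injEq] at heq
              have h3 : l.2 = true := by simpa using heq.2
              exact hne' (Prod.ext_iff.mpr ⟨heq.1, h3⟩)
            · exact hmem
          · obtain ⟨hne', hlC⟩ := Finset.mem_erase.mp hl'
            rcases Finset.mem_insert.mp (hF1 l hlC) with heq | hmem
            · exfalso
              rw [Prod.mk.injEq] at heq
              have h3 : l.2 = false := by simpa using heq.2
              exact hne' (Prod.ext_iff.mpr ⟨heq.1, h3⟩)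
            · exact hmem
        have hRcard : R.card ≤ k := by
          have hle : R.card ≤ α.card :=
            Finset.card_le_card_of_injOn (fun l => (l.1, !l.2)) (fun l hl => hFR l hl)
              (by
                intro a _ b _ hab
                rw [Prod.mk.injEq] at hab
                have h2' : a.2 = b.2 := by simpa using hab.2
                exact Prod.ext_iff.mpr ⟨hab.1, h2'⟩)
          exact hle.trans (Nat.lt_succ_iff.mp hcard)
        exact hα.2.2 R (Der.res hC0 hC1 hxC0 hxC1 hRcard) hFR
      obtain ⟨b, hb⟩ := key
      refine ⟨insert (x, b) α, ⟨?_, ?_, hb⟩, Finset.subset_insert _ _,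
        b, Finset.mem_insert_self _ _⟩
      · intro y c c' hc hc'
        rcases Finset.mem_insert.mp hc with heq | hmem <;>
          rcases Finset.mem_insert.mp hc' with heq' | hmem'
        · rw [Prod.mk.injEq] at heq heq'
          rw [heq.2, heq'.2]
        · exfalso
          rw [Prod.mk.injEq] at heq
          exact hx c' (heq.1 ▸ hmem')
        · exfalso
          rw [Prod.mk.injEq] at heq'
          exact hx c (heq'.1 ▸ hmem)
        · exact hα.1 y c c' hmem hmem'
      · rw [Finset.card_insert_of_notMem (hx b)]
        have hk : α.card ≤ k := Nat.lt_succ_iff.mp hcard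
        omega
end

section
/- Let Σ be an unsatisfiable set of clauses. If there exists an extendible (k+1)-family of partial assignments for Σ, then there is no resolution refutation of Σ of width at most k. -/
attribute [local instance] Classical.propDecidable

/-- If Σ is unsatisfiable and there is an extendible (k+1)-family for Σ, then there is
no resolution refutation of Σ of width at most k. -/
theorem no_narrow_refutation_of_extendible_family (S : Set Clause) (k : ℕ)
    (hU : Unsat S) (A : Set (Finset (ℕ × Bool))) (hA : ExtFamily S (k + 1) A) :
    ¬ ∃ L : List Clause, IsRefutation S L ∧ ∀ C ∈ L, C.card ≤ k := by
  rintro ⟨L, ⟨hder, hemp⟩, hw⟩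
  obtain ⟨hne, hfun, hnofals, hcardA, hdown, hext⟩ := hA
  obtain ⟨α₀, hα₀⟩ := hne
  have hemptyA : (∅ : Finset (ℕ × Bool)) ∈ A := hdown α₀ hα₀ ∅ (Finset.empty_subset _)
  have main : ∀ i, i < L.length →
      (∀ x b, (x, b) ∈ L.getD i ∅ → x ∈ varsOf S) ∧
      (∀ α ∈ A, ¬ Falsifies α (L.getD i ∅)) := by
    intro i
    induction i using Nat.strong_induction_on with
    | _ i ih =>
      intro hi
      rcases hder i hi with hS | ⟨j, hj, m, hm, x, hxj, hxm, hres⟩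
      · exact ⟨fun x b hx => ⟨_, hS, b, hx⟩, fun α hα => hnofals α hα _ hS⟩
      · have hjlt := hj.trans hi
        have hmlt := hm.trans hi
        obtain ⟨hvj, hfj⟩ := ih j hj hjlt
        obtain ⟨hvm, hfm⟩ := ih m hm hmlt
        constructor
        · intro x' b hx'
          rw [hres] at hx'
          rcases Finset.mem_union.mp hx' with h | h
          · exact hvj x' b (Finset.mem_of_mem_erase h)
          · exact hvm x' b (Finset.mem_of_mem_erase h)
        · intro α hα hfal
          set C := L.getD i ∅ with hC
          have hCL : C ∈ L := by
            rw [hC, List.getD_eq_getElem L ∅ hi]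
            exact List.getElem_mem hi
          set α' : Finset (ℕ × Bool) := C.image (fun l => (l.1, !l.2)) with hα'
          have hsub : α' ⊆ α := by
            intro p hp
            obtain ⟨l, hl, rfl⟩ := Finset.mem_image.mp hp
            exact hfal l hl
          have hα'A : α' ∈ A := hdown α hα α' hsub
          have hcard' : α'.card < k + 1 := by
            calc α'.card ≤ C.card := Finset.card_image_le
              _ ≤ k := hw C hCL
              _ < k + 1 := Nat.lt_succ_self _
          have hxS : x ∈ varsOf S := hvj x true hxj
          obtain ⟨β, hβA, hβsub, b, hxb⟩ := hext α' hα'A hcard' x hxS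
          have hCsub : ∀ l, l ∈ C → (l.1, !l.2) ∈ β := fun l hl =>
            hβsub (Finset.mem_image_of_mem _ hl)
          cases b with
          | true =>
            apply hfm β hβA
            intro l hl
            by_cases hlx : l = (x, false)
            · subst hlx; exact hxb
            · apply hCsub
              rw [hres]
              exact Finset.mem_union_right _ (Finset.mem_erase.mpr ⟨hlx, hl⟩)
          | false =>
            apply hfj β hβA
            intro l hl
            by_cases hlx : l = (x, true)
            · subst hlx; exact hxb
            · apply hCsub
              rw [hres]
              exact Finset.mem_union_left _ (Finset.mem_erase.mpr ⟨hlx, hl⟩)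
  obtain ⟨i, hi, hEi⟩ := List.mem_iff_getElem.mp hemp
  have h := (main i hi).2 ∅ hemptyA
  apply h
  rw [List.getD_eq_getElem L ∅ hi, hEi]
  intro l hl
  exact absurd hl (Finset.notMem_empty l)
end

section
/- Let Σ be a set of clauses with w(Σ) ≤ k. There is no resolution refutation of Σ of width at most k if and only if there exists an extendible (k+1)-family of partial assignments for Σ. -/
attribute [local instance] Classical.propDecidable

lemma mem_iff_getD {L : List Clause} {C : Clause} :
    C ∈ L ↔ ∃ i, i < L.length ∧ L.getD i ∅ = C := by
  constructor
  · intro h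
    obtain ⟨i, hi, rfl⟩ := List.mem_iff_getElem.mp h
    exact ⟨i, hi, List.getD_eq_getElem _ _ hi⟩
  · rintro ⟨i, hi, rfl⟩
    rw [List.getD_eq_getElem _ _ hi]
    exact List.getElem_mem hi

lemma IsDerivation.append {S : Set Clause} {L₁ L₂ : List Clause}
    (h₁ : IsDerivation S L₁) (h₂ : IsDerivation S L₂) : IsDerivation S (L₁ ++ L₂) := by
  intro i hi
  by_cases hlt : i < L₁.length
  · rcases h₁ i hlt with h | ⟨j, hj, m, hm, x, a, b, c⟩
    · left; rwa [List.getD_append _ _ _ _ hlt]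
    · right
      refine ⟨j, hj, m, hm, x, ?_, ?_, ?_⟩
      · rwa [List.getD_append _ _ _ _ (hj.trans hlt)]
      · rwa [List.getD_append _ _ _ _ (hm.trans hlt)]
      · rw [List.getD_append _ _ _ _ hlt, List.getD_append _ _ _ _ (hj.trans hlt),
          List.getD_append _ _ _ _ (hm.trans hlt)]
        exact c
  · push_neg at hlt
    have hi2 : i - L₁.length < L₂.length := by
      rw [List.length_append] at hi; omega
    rcases h₂ _ hi2 with h | ⟨j, hj, m, hm, x, a, b, c⟩
    · left; rwa [List.getD_append_right _ _ _ _ hlt]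
    · right
      refine ⟨j + L₁.length, by omega, m + L₁.length, by omega, x, ?_, ?_, ?_⟩
      · rw [List.getD_append_right _ _ _ _ (by omega : L₁.length ≤ j + L₁.length)]
        simpa using a
      · rw [List.getD_append_right _ _ _ _ (by omega : L₁.length ≤ m + L₁.length)]
        simpa using b
      · rw [List.getD_append_right _ _ _ _ hlt,
          List.getD_append_right _ _ _ _ (by omega : L₁.length ≤ j + L₁.length),
          List.getD_append_right _ _ _ _ (by omega : L₁.length ≤ m + L₁.length)]
        simpa using c

lemma derivation_snoc {S : Set Clause} {L : List Clause} {R : Clause}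
    (h : IsDerivation S L)
    (hr : ∃ j, j < L.length ∧ ∃ m, m < L.length ∧ ∃ x : ℕ,
      (x, true) ∈ L.getD j ∅ ∧ (x, false) ∈ L.getD m ∅ ∧
      R = resolventCl (L.getD j ∅) (L.getD m ∅) x) :
    IsDerivation S (L ++ [R]) := by
  intro i hi
  rw [List.length_append, List.length_singleton] at hi
  by_cases hlt : i < L.length
  · rcases h i hlt with hh | ⟨j, hj, m, hm, x, a, b, c⟩
    · left; rwa [List.getD_append _ _ _ _ hlt]
    · right
      refine ⟨j, hj, m, hm, x, ?_, ?_, ?_⟩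
      · rwa [List.getD_append _ _ _ _ (hj.trans hlt)]
      · rwa [List.getD_append _ _ _ _ (hm.trans hlt)]
      · rw [List.getD_append _ _ _ _ hlt, List.getD_append _ _ _ _ (hj.trans hlt),
          List.getD_append _ _ _ _ (hm.trans hlt)]
        exact c
  · have hieq : i = L.length := by omega
    subst hieq
    obtain ⟨j, hj, m, hm, x, a, b, c⟩ := hr
    right
    have hR : (L ++ [R]).getD L.length ∅ = R := by
      rw [List.getD_append_right _ _ _ _ le_rfl]; simp
    refine ⟨j, hj, m, hm, x, ?_, ?_, ?_⟩
    · rwa [List.getD_append _ _ _ _ hj]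
    · rwa [List.getD_append _ _ _ _ hm]
    · rw [hR, List.getD_append _ _ _ _ hj, List.getD_append _ _ _ _ hm]
      exact c

def DerivableW (S : Set Clause) (k : ℕ) (C : Clause) : Prop :=
  ∃ L : List Clause, IsDerivation S L ∧ C ∈ L ∧ ∀ C' ∈ L, C'.card ≤ k

lemma derivable_of_mem {S : Set Clause} {k : ℕ} {C : Clause} (hC : C ∈ S) (hc : C.card ≤ k) :
    DerivableW S k C := by
  refine ⟨[C], ?_, List.mem_singleton.mpr rfl, by simpa using hc⟩
  intro i hi
  simp only [List.length_singleton] at hi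
  interval_cases i
  left; simpa using hC

lemma derivable_resolve {S : Set Clause} {k : ℕ} {C₁ C₀ : Clause} {x : ℕ}
    (h₁ : DerivableW S k C₁) (h₀ : DerivableW S k C₀)
    (hx1 : (x, true) ∈ C₁) (hx0 : (x, false) ∈ C₀)
    (hcard : (resolventCl C₁ C₀ x).card ≤ k) : DerivableW S k (resolventCl C₁ C₀ x) := by
  obtain ⟨L₁, hd₁, hm₁, hw₁⟩ := h₁
  obtain ⟨L₀, hd₀, hm₀, hw₀⟩ := h₀
  obtain ⟨i₁, hi₁, he₁⟩ := mem_iff_getD.mp hm₁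
  obtain ⟨i₀, hi₀, he₀⟩ := mem_iff_getD.mp hm₀
  refine ⟨(L₁ ++ L₀) ++ [resolventCl C₁ C₀ x], ?_, ?_, ?_⟩
  · refine derivation_snoc (hd₁.append hd₀) ⟨i₁, ?_, L₁.length + i₀, ?_, x, ?_, ?_, ?_⟩
    · simp [List.length_append]; omega
    · simp [List.length_append]; omega
    · rw [List.getD_append _ _ _ _ hi₁, he₁]; exact hx1
    · rw [List.getD_append_right _ _ _ _ (by omega),
        show L₁.length + i₀ - L₁.length = i₀ by omega, he₀]
      exact hx0
    · rw [List.getD_append _ _ _ _ hi₁, he₁,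
        List.getD_append_right _ _ _ _ (by omega : L₁.length ≤ L₁.length + i₀),
        show L₁.length + i₀ - L₁.length = i₀ by omega, he₀]
  · simp
  · intro C' hC'
    rcases List.mem_append.mp hC' with h | h
    · rcases List.mem_append.mp h with h | h
      · exact hw₁ _ h
      · exact hw₀ _ h
    · rw [List.mem_singleton.mp h]; exact hcard

/-- Atserias–Dalmau characterization: for w(Σ) ≤ k, Σ has no resolution refutation of
width at most k iff there is an extendible (k+1)-family for Σ. -/
theorem width_characterization (S : Set Clause) (k : ℕ) (hw : ∀ C ∈ S, C.card ≤ k) :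
    (¬ ∃ L : List Clause, IsRefutation S L ∧ ∀ C ∈ L, C.card ≤ k) ↔
      ∃ A : Set (Finset (ℕ × Bool)), ExtFamily S (k + 1) A := by
  constructor
  · -- no narrow refutation → extendible family
    intro hnoref
    refine ⟨{α | Functional α ∧ α.card ≤ k + 1 ∧ ∀ C, DerivableW S k C → ¬ Falsifies α C},
      ?_, fun α hα => hα.1, fun α hα C hC => hα.2.2 C (derivable_of_mem hC (hw C hC)),
      fun α hα => hα.2.1, ?_, ?_⟩
    · -- nonempty
      refine ⟨∅, fun x b b' h => by simp at h, by simp, ?_⟩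
      intro C hC hf
      have hCe : C = ∅ := Finset.eq_empty_of_forall_notMem fun l hl => by
        have := hf l hl; simp at this
      obtain ⟨L, hd, hm, hwL⟩ := hC
      exact hnoref ⟨L, ⟨hd, hCe ▸ hm⟩, hwL⟩
    · -- downward closed
      intro α hα β hβ
      exact ⟨fun x b b' h h' => hα.1 x b b' (hβ h) (hβ h'),
        (Finset.card_le_card hβ).trans hα.2.1,
        fun C hC hf => hα.2.2 C hC fun l hl => hβ (hf l hl)⟩
    · -- extension
      intro α hα hcard x hx
      by_cases hxa : ∃ b, (x, b) ∈ α
      · exact ⟨α, hα, subset_rfl, hxa⟩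
      push_neg at hxa
      have hfun : ∀ b : Bool, Functional (insert (x, b) α) := by
        intro b y c c' hc hc'
        rcases Finset.mem_insert.mp hc with h | h <;>
          rcases Finset.mem_insert.mp hc' with h' | h'
        · simp only [Prod.mk.injEq] at h h'; rw [h.2, h'.2]
        · simp only [Prod.mk.injEq] at h; exact absurd (h.1 ▸ h') (hxa c')
        · simp only [Prod.mk.injEq] at h'; exact absurd (h'.1 ▸ h) (hxa c)
        · exact hα.1 y c c' h h'
      have hcardb : ∀ b : Bool, (insert (x, b) α).card ≤ k + 1 := fun b =>
        (Finset.card_insert_le _ _).trans (by omega)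
      by_cases h1 : insert ((x, true) : ℕ × Bool) α ∈
          {α | Functional α ∧ α.card ≤ k + 1 ∧ ∀ C, DerivableW S k C → ¬ Falsifies α C}
      · exact ⟨_, h1, Finset.subset_insert _ _, true, Finset.mem_insert_self _ _⟩
      by_cases h0 : insert ((x, false) : ℕ × Bool) α ∈
          {α | Functional α ∧ α.card ≤ k + 1 ∧ ∀ C, DerivableW S k C → ¬ Falsifies α C}
      · exact ⟨_, h0, Finset.subset_insert _ _, false, Finset.mem_insert_self _ _⟩
      exfalso
      have hnot : ∀ b : Bool, ∃ C, DerivableW S k C ∧ Falsifies (insert (x, b) α) C := by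
        intro b
        have hmem : insert ((x, b) : ℕ × Bool) α ∉
            {α | Functional α ∧ α.card ≤ k + 1 ∧ ∀ C, DerivableW S k C → ¬ Falsifies α C} := by
          cases b
          · exact h0
          · exact h1
        by_contra hno
        push_neg at hno
        exact hmem ⟨hfun b, hcardb b, fun C hC hf => hno C hC hf⟩
      obtain ⟨C₀, hd₀, hf₀⟩ := hnot true
      obtain ⟨C₁, hd₁, hf₁⟩ := hnot false
      have hx₀ : (x, false) ∈ C₀ := by
        by_contra hxc
        apply hα.2.2 C₀ hd₀
        intro l hl
        rcases Finset.mem_insert.mp (hf₀ l hl) with h | h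
        · exfalso
          apply hxc
          simp only [Prod.mk.injEq] at h
          have hl2 : l.2 = false := by
            have := h.2; simp at this; exact this
          have : l = (x, false) := Prod.ext h.1 hl2
          exact this ▸ hl
        · exact h
      have hx₁ : (x, true) ∈ C₁ := by
        by_contra hxc
        apply hα.2.2 C₁ hd₁
        intro l hl
        rcases Finset.mem_insert.mp (hf₁ l hl) with h | h
        · exfalso
          apply hxc
          simp only [Prod.mk.injEq] at h
          have hl2 : l.2 = true := by
            have := h.2; simp at this; exact this
          have : l = (x, true) := Prod.ext h.1 hl2
          exact this ▸ hl
        · exact h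
      have hfR : Falsifies α (resolventCl C₁ C₀ x) := by
        intro l hl
        rcases Finset.mem_union.mp hl with h | h
        · have hne := Finset.ne_of_mem_erase h
          rcases Finset.mem_insert.mp (hf₁ l (Finset.mem_of_mem_erase h)) with h' | h'
          · exfalso
            apply hne
            simp only [Prod.mk.injEq] at h'
            have hl2 : l.2 = true := by have := h'.2; simp at this; exact this
            exact Prod.ext h'.1 hl2
          · exact h'
        · have hne := Finset.ne_of_mem_erase h
          rcases Finset.mem_insert.mp (hf₀ l (Finset.mem_of_mem_erase h)) with h' | h'
          · exfalso
            apply hne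
            simp only [Prod.mk.injEq] at h'
            have hl2 : l.2 = false := by have := h'.2; simp at this; exact this
            exact Prod.ext h'.1 hl2
          · exact h'
      have hinj : Function.Injective (fun l : ℕ × Bool => (l.1, !l.2)) := by
        rintro ⟨a, b⟩ ⟨c, d⟩ h
        simp only [Prod.mk.injEq] at h ⊢
        exact ⟨h.1, Bool.not_inj h.2⟩
      have hcR : (resolventCl C₁ C₀ x).card ≤ k := by
        have hsub : (resolventCl C₁ C₀ x).image (fun l : ℕ × Bool => (l.1, !l.2)) ⊆ α := by
          intro p hp
          obtain ⟨l, hl, rfl⟩ := Finset.mem_image.mp hp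
          exact hfR l hl
        calc (resolventCl C₁ C₀ x).card
            = ((resolventCl C₁ C₀ x).image (fun l : ℕ × Bool => (l.1, !l.2))).card :=
              (Finset.card_image_of_injective _ hinj).symm
          _ ≤ α.card := Finset.card_le_card hsub
          _ ≤ k := by omega
      exact hα.2.2 _ (derivable_resolve hd₁ hd₀ hx₁ hx₀ hcR) hfR
  · -- extendible family → no narrow refutation
    rintro ⟨A, hne, hfunA, hnofal, hcA, hdown, hext⟩ ⟨L, ⟨hder, hmem⟩, hwid⟩
    have key : ∀ i, i < L.length →
        (∀ α ∈ A, ¬ Falsifies α (L.getD i ∅)) ∧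
        (∀ y : ℕ, ∀ b : Bool, (y, b) ∈ L.getD i ∅ → y ∈ varsOf S) := by
      intro i
      induction i using Nat.strong_induction_on with
      | _ i IH =>
        intro hi
        rcases hder i hi with hS | ⟨j, hj, m, hm, x, hxj, hxm, hres⟩
        · exact ⟨fun α hα => hnofal α hα _ hS, fun y b hy => ⟨_, hS, b, hy⟩⟩
        · have IHj := IH j hj (by omega)
          have IHm := IH m hm (by omega)
          constructor
          · intro α hα hfal
            have hCiL : L.getD i ∅ ∈ L := mem_iff_getD.mpr ⟨i, hi, rfl⟩
            set β := (L.getD i ∅).image (fun l : ℕ × Bool => (l.1, !l.2)) with hβdef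
            have hβα : β ⊆ α := by
              intro p hp
              obtain ⟨l, hl, rfl⟩ := Finset.mem_image.mp hp
              exact hfal l hl
            have hβA : β ∈ A := hdown α hα β hβα
            have hβcard : β.card < k + 1 :=
              lt_of_le_of_lt (Finset.card_image_le.trans (hwid _ hCiL)) (by omega)
            have hxvar : x ∈ varsOf S := IHj.2 x true hxj
            obtain ⟨β', hβ'A, hββ', b, hbβ'⟩ := hext β hβA hβcard x hxvar
            have hβfal : Falsifies β (L.getD i ∅) := fun l hl =>
              Finset.mem_image_of_mem _ hl
            cases b
            · -- (x, false) ∈ β' : β' falsifies the clause at j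
              apply IHj.1 β' hβ'A
              intro l hl
              by_cases hlx : l = (x, true)
              · subst hlx; simpa using hbβ'
              · have h1 : l ∈ (L.getD j ∅).erase (x, true) := Finset.mem_erase.mpr ⟨hlx, hl⟩
                have h2 : l ∈ L.getD i ∅ := by
                  rw [hres]; exact Finset.mem_union_left _ h1
                exact hββ' (hβfal l h2)
            · -- (x, true) ∈ β' : β' falsifies the clause at m
              apply IHm.1 β' hβ'A
              intro l hl
              by_cases hlx : l = (x, false)
              · subst hlx; simpa using hbβ'
              · have h1 : l ∈ (L.getD m ∅).erase (x, false) := Finset.mem_erase.mpr ⟨hlx, hl⟩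
                have h2 : l ∈ L.getD i ∅ := by
                  rw [hres]; exact Finset.mem_union_right _ h1
                exact hββ' (hβfal l h2)
          · intro y b hy
            rw [hres] at hy
            rcases Finset.mem_union.mp hy with h | h
            · exact IHj.2 y b (Finset.mem_of_mem_erase h)
            · exact IHm.2 y b (Finset.mem_of_mem_erase h)
    obtain ⟨i, hi, hEi⟩ := mem_iff_getD.mp hmem
    obtain ⟨α, hα⟩ := hne
    exact (key i hi).1 α hα (by rw [hEi]; exact fun l hl => absurd hl (Finset.notMem_empty l))
end

section
/- Any tree-style resolution refutation of an unsatisfiable clause set Σ can be transformed into a regular tree-style refutation of Σ of size at most that of the original refutation. -/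
attribute [local instance] Classical.propDecidable

/-- Tree-style resolution derivations: a binary tree whose leaves are (occurrences of)
input clauses and whose internal nodes are resolution inferences on a stated variable. -/
inductive RTree where
  | leaf : Clause → RTree
  | node : ℕ → RTree → RTree → RTree

/-- Conclusion clause of a resolution tree. -/
def conc : RTree → Clause
  | .leaf C => C
  | .node x l r => (conc l).erase (x, true) ∪ (conc r).erase (x, false)

/-- Validity: leaves are clauses of S, and each step resolves a variable occurring
positively in the left premiss and negatively in the right premiss. -/
def valid (S : Set Clause) : RTree → Prop
  | .leaf C => C ∈ S
  | .node x l r => (x, true) ∈ conc l ∧ (x, false) ∈ conc r ∧ valid S l ∧ valid S r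

/-- Size: the number of clause occurrences. -/
def tsize : RTree → ℕ
  | .leaf _ => 1
  | .node _ l r => tsize l + tsize r + 1

/-- Width: the maximum width of a clause occurring in the tree. -/
def twidth : RTree → ℕ
  | .leaf C => C.card
  | .node x l r => max (conc (RTree.node x l r)).card (max (twidth l) (twidth r))

/-- The variables resolved upon in a tree. -/
def resolvedVars : RTree → Finset ℕ
  | .leaf _ => ∅
  | .node x l r => insert x (resolvedVars l ∪ resolvedVars r)

/-- Regularity: no variable is resolved upon twice along any path. -/
def regular : RTree → Prop
  | .leaf _ => True
  | .node x l r => x ∉ resolvedVars l ∧ x ∉ resolvedVars r ∧ regular l ∧ regular r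

/-- A tree-style resolution refutation of S. -/
def IsTreeRefutation (S : Set Clause) (t : RTree) : Prop := valid S t ∧ conc t = ∅

/-- S has a regular resolution refutation of width at most k.  (Regular refutations
unfold, width for width, into regular tree-style refutations, so regular refutation
width is captured by regular trees.) -/
def HasRegularRefutationOfWidth (S : Set Clause) (k : ℕ) : Prop :=
  ∃ t : RTree, IsTreeRefutation S t ∧ regular t ∧ twidth t ≤ k

lemma prune_aux (x : ℕ) (b : Bool) (S : Set Clause) :
    ∀ t : RTree, valid S t → regular t →
    ∃ t', valid S t' ∧ regular t' ∧ x ∉ resolvedVars t' ∧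
      resolvedVars t' ⊆ resolvedVars t ∧ conc t' ⊆ insert (x, b) (conc t) ∧
      tsize t' ≤ tsize t := by
  intro t
  induction t with
  | leaf C =>
    intro hv hr
    exact ⟨.leaf C, hv, hr, by simp [resolvedVars], subset_rfl,
      Finset.subset_insert _ _, le_rfl⟩
  | node y l r ihl ihr =>
    intro hv hr
    obtain ⟨hyl, hyr, hvl, hvr⟩ := hv
    obtain ⟨hxl, hxr, hrl, hrr⟩ := hr
    have hsubl : resolvedVars l ⊆ resolvedVars (.node y l r) := by
      intro a ha; simp [resolvedVars]; tauto
    have hsubr : resolvedVars r ⊆ resolvedVars (.node y l r) := by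
      intro a ha; simp [resolvedVars]; tauto
    by_cases hxy : y = x
    · subst hxy
      cases b with
      | true =>
        refine ⟨l, hvl, hrl, hxl, hsubl, ?_, ?_⟩
        · intro a ha
          by_cases hax : a = (y, true)
          · simp [hax]
          · simp only [Finset.mem_insert, conc, Finset.mem_union]
            exact Or.inr (Or.inl (Finset.mem_erase.2 ⟨hax, ha⟩))
        · simp [tsize]; omega
      | false =>
        refine ⟨r, hvr, hrr, hxr, hsubr, ?_, ?_⟩
        · intro a ha
          by_cases hax : a = (y, false)
          · simp [hax]
          · simp only [Finset.mem_insert, conc, Finset.mem_union]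
            exact Or.inr (Or.inr (Finset.mem_erase.2 ⟨hax, ha⟩))
        · simp [tsize]; omega
    · obtain ⟨l₁, hvl₁, hrl₁, hxl₁, hsl₁, hcl₁, hsz₁⟩ := ihl hvl hrl
      obtain ⟨r₁, hvr₁, hrr₁, hxr₁, hsr₁, hcr₁, hsz₂⟩ := ihr hvr hrr
      by_cases hy1 : (y, true) ∈ conc l₁
      · by_cases hy2 : (y, false) ∈ conc r₁
        · refine ⟨.node y l₁ r₁, ⟨hy1, hy2, hvl₁, hvr₁⟩,
            ⟨fun h => hxl (hsl₁ h), fun h => hxr (hsr₁ h), hrl₁, hrr₁⟩, ?_, ?_, ?_, ?_⟩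
          · simp only [resolvedVars, Finset.mem_insert, Finset.mem_union]
            push_neg
            exact ⟨fun h => hxy h.symm, hxl₁, hxr₁⟩
          · simp only [resolvedVars]
            intro a ha
            simp only [Finset.mem_insert, Finset.mem_union] at ha ⊢
            rcases ha with h | h | h
            · exact Or.inl h
            · exact Or.inr (Or.inl (hsl₁ h))
            · exact Or.inr (Or.inr (hsr₁ h))
          · intro a ha
            simp only [conc, Finset.mem_union, Finset.mem_erase] at ha
            simp only [Finset.mem_insert, conc, Finset.mem_union, Finset.mem_erase]
            rcases ha with ⟨hne, hmem⟩ | ⟨hne, hmem⟩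
            · rcases Finset.mem_insert.1 (hcl₁ hmem) with h | h
              · exact Or.inl h
              · exact Or.inr (Or.inl ⟨hne, h⟩)
            · rcases Finset.mem_insert.1 (hcr₁ hmem) with h | h
              · exact Or.inl h
              · exact Or.inr (Or.inr ⟨hne, h⟩)
          · simp only [tsize]; omega
        · -- take r₁
          refine ⟨r₁, hvr₁, hrr₁, hxr₁, fun a ha => hsubr (hsr₁ ha), ?_, ?_⟩
          · intro a ha
            rcases Finset.mem_insert.1 (hcr₁ ha) with h | h
            · exact Finset.mem_insert.2 (Or.inl h)
            · have hne : a ≠ (y, false) := fun heq => hy2 (heq ▸ ha)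
              exact Finset.mem_insert.2 (Or.inr (by
                simp only [conc, Finset.mem_union, Finset.mem_erase]
                exact Or.inr ⟨hne, h⟩))
          · simp only [tsize]; omega
      · -- take l₁
        refine ⟨l₁, hvl₁, hrl₁, hxl₁, fun a ha => hsubl (hsl₁ ha), ?_, ?_⟩
        · intro a ha
          rcases Finset.mem_insert.1 (hcl₁ ha) with h | h
          · exact Finset.mem_insert.2 (Or.inl h)
          · have hne : a ≠ (y, true) := fun heq => hy1 (heq ▸ ha)
            exact Finset.mem_insert.2 (Or.inr (by
              simp only [conc, Finset.mem_union, Finset.mem_erase]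
              exact Or.inl ⟨hne, h⟩))
        · simp only [tsize]; omega

lemma prune_main (S : Set Clause) :
    ∀ t : RTree, valid S t →
    ∃ t', valid S t' ∧ regular t' ∧ resolvedVars t' ⊆ resolvedVars t ∧
      conc t' ⊆ conc t ∧ tsize t' ≤ tsize t := by
  intro t
  induction t with
  | leaf C =>
    intro hv
    exact ⟨.leaf C, hv, trivial, subset_rfl, subset_rfl, le_rfl⟩
  | node y l r ihl ihr =>
    intro hv
    obtain ⟨hyl, hyr, hvl, hvr⟩ := hv
    obtain ⟨l', hvl', hrl', hsl', hcl', hszl'⟩ := ihl hvl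
    obtain ⟨r', hvr', hrr', hsr', hcr', hszr'⟩ := ihr hvr
    have hsubl : resolvedVars l ⊆ resolvedVars (.node y l r) := by
      intro a ha; simp [resolvedVars]; tauto
    have hsubr : resolvedVars r ⊆ resolvedVars (.node y l r) := by
      intro a ha; simp [resolvedVars]; tauto
    by_cases hy1 : (y, true) ∈ conc l'
    · by_cases hy2 : (y, false) ∈ conc r'
      · -- prune y out of both sides
        obtain ⟨l₁, hvl₁, hrl₁, hxl₁, hsl₁, hcl₁, hsz₁⟩ := prune_aux y true S l' hvl' hrl'
        obtain ⟨r₁, hvr₁, hrr₁, hxr₁, hsr₁, hcr₁, hsz₂⟩ := prune_aux y false S r' hvr' hrr'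
        by_cases hz1 : (y, true) ∈ conc l₁
        · by_cases hz2 : (y, false) ∈ conc r₁
          · refine ⟨.node y l₁ r₁, ⟨hz1, hz2, hvl₁, hvr₁⟩,
              ⟨hxl₁, hxr₁, hrl₁, hrr₁⟩, ?_, ?_, ?_⟩
            · simp only [resolvedVars]
              intro a ha
              simp only [Finset.mem_insert, Finset.mem_union] at ha ⊢
              rcases ha with h | h | h
              · exact Or.inl h
              · exact Or.inr (Or.inl (hsl' (hsl₁ h)))
              · exact Or.inr (Or.inr (hsr' (hsr₁ h)))
            · intro a ha
              simp only [conc, Finset.mem_union, Finset.mem_erase] at ha ⊢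
              rcases ha with ⟨hne, hmem⟩ | ⟨hne, hmem⟩
              · rcases Finset.mem_insert.1 (hcl₁ hmem) with h | h
                · exact absurd h hne
                · exact Or.inl ⟨hne, hcl' h⟩
              · rcases Finset.mem_insert.1 (hcr₁ hmem) with h | h
                · exact absurd h hne
                · exact Or.inr ⟨hne, hcr' h⟩
            · simp only [tsize]; omega
          · -- take r₁
            refine ⟨r₁, hvr₁, hrr₁, fun a ha => hsubr (hsr' (hsr₁ ha)), ?_, ?_⟩
            · intro a ha
              rcases Finset.mem_insert.1 (hcr₁ ha) with h | h
              · exact absurd (h ▸ ha) hz2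
              · have hne : a ≠ (y, false) := fun heq => hz2 (heq ▸ ha)
                simp only [conc, Finset.mem_union, Finset.mem_erase]
                exact Or.inr ⟨hne, hcr' h⟩
            · simp only [tsize]; omega
        · -- take l₁
          refine ⟨l₁, hvl₁, hrl₁, fun a ha => hsubl (hsl' (hsl₁ ha)), ?_, ?_⟩
          · intro a ha
            rcases Finset.mem_insert.1 (hcl₁ ha) with h | h
            · exact absurd (h ▸ ha) hz1
            · have hne : a ≠ (y, true) := fun heq => hz1 (heq ▸ ha)
              simp only [conc, Finset.mem_union, Finset.mem_erase]
              exact Or.inl ⟨hne, hcl' h⟩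
          · simp only [tsize]; omega
      · -- take r'
        refine ⟨r', hvr', hrr', fun a ha => hsubr (hsr' ha), ?_, ?_⟩
        · intro a ha
          have hne : a ≠ (y, false) := fun heq => hy2 (heq ▸ ha)
          simp only [conc, Finset.mem_union, Finset.mem_erase]
          exact Or.inr ⟨hne, hcr' ha⟩
        · simp only [tsize]; omega
    · -- take l'
      refine ⟨l', hvl', hrl', fun a ha => hsubl (hsl' ha), ?_, ?_⟩
      · intro a ha
        have hne : a ≠ (y, true) := fun heq => hy1 (heq ▸ ha)
        simp only [conc, Finset.mem_union, Finset.mem_erase]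
        exact Or.inl ⟨hne, hcl' ha⟩
      · simp only [tsize]; omega

/-- Any tree-style resolution refutation of an unsatisfiable clause set can be pruned
to a regular tree-style refutation of size at most that of the original. -/
theorem pruning (S : Set Clause) (hU : Unsat S) (t : RTree) (ht : IsTreeRefutation S t) :
    ∃ t' : RTree, IsTreeRefutation S t' ∧ regular t' ∧ tsize t' ≤ tsize t := by
  obtain ⟨hv, hc⟩ := ht
  obtain ⟨t', hv', hr', _, hc', hsz'⟩ := prune_main S t hv
  exact ⟨t', ⟨hv', Finset.subset_empty.1 (hc ▸ hc')⟩, hr', hsz'⟩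
end
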